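/- If ψ : [1,∞) → R is locally absolutely continuous with ψ(1) = 0 and has finite ℓ-equivariant energy E(ψ) = ∫_1^∞ (ψ'(r)² + ℓ(ℓ+1) sin²(ψ(r))/r²) r² dr < ∞, then the limit lim_{r→∞} ψ(r) exists and equals nπ for some integer n. -/

import Mathlib

open MeasureTheory

/-- A finite-energy ℓ-equivariant map angle converges to an integer multiple of π: if
`ψ : [1,∞) → ℝ` is locally absolutely continuous (with derivative `g` in the sense of the
fundamental theorem of calculus), `ψ 1 = 0`, and the energy
`∫_1^∞ (g² + ℓ(ℓ+1) sin²(ψ)/r²) r² dr` is finite, then `ψ(r) → nπ` as `r → ∞` for some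
integer `n`. -/
theorem finite_energy_limit (ℓ : ℕ) (hℓ : 1 ≤ ℓ) (ψ g : ℝ → ℝ)
    (hAC : ∀ a b : ℝ, 1 ≤ a → a ≤ b →
      IntervalIntegrable g volume a b ∧ ψ b - ψ a = ∫ t in a..b, g t)
    (hbc : ψ 1 = 0)
    (hE : IntegrableOn
      (fun r : ℝ => (g r ^ 2 + (ℓ : ℝ) * ((ℓ : ℝ) + 1) * Real.sin (ψ r) ^ 2 / r ^ 2) * r ^ 2)
      (Set.Ioi 1)) :
    ∃ n : ℤ, Filter.Tendsto ψ Filter.atTop (nhds ((n : ℝ) * Real.pi)) := by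
  have hc1 : (1:ℝ) ≤ (ℓ : ℝ) * ((ℓ : ℝ) + 1) := by
    have : (1:ℝ) ≤ (ℓ:ℝ) := by exact_mod_cast hℓ
    nlinarith
  have hc0 : (0:ℝ) < (ℓ : ℝ) * ((ℓ : ℝ) + 1) := by linarith
  -- measurability of g on (1, ∞)
  have hgm : AEStronglyMeasurable g (volume.restrict (Set.Ioi (1:ℝ))) := by
    have hU : Set.Ioi (1:ℝ) = ⋃ n : ℕ, Set.Ioc (1:ℝ) ((n:ℝ)+1) := by
      ext x
      simp only [Set.mem_Ioi, Set.mem_iUnion, Set.mem_Ioc]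
      constructor
      · intro hx
        obtain ⟨n, hn⟩ := exists_nat_ge x
        exact ⟨n, hx, hn.trans (by linarith)⟩
      · rintro ⟨n, h1, _⟩; exact h1
    rw [hU, aestronglyMeasurable_iUnion_iff]
    intro n
    have h1n : (1:ℝ) ≤ (n:ℝ) + 1 := le_add_of_nonneg_left n.cast_nonneg
    have := (hAC 1 ((n:ℝ)+1) le_rfl h1n).1
    exact ((intervalIntegrable_iff_integrableOn_Ioc_of_le h1n).mp this).aestronglyMeasurable
  -- g² r² is integrable on (1, ∞)
  have hgr2 : IntegrableOn (fun r : ℝ => g r ^ 2 * r ^ 2) (Set.Ioi 1) := by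
    refine hE.mono' ((hgm.pow 2).mul ((measurable_id.pow_const 2).aestronglyMeasurable)) ?_
    filter_upwards [ae_restrict_mem measurableSet_Ioi] with r hr
    have hr1 : (1:ℝ) < r := hr
    have h2 : (0:ℝ) ≤ (ℓ:ℝ) * ((ℓ:ℝ)+1) * Real.sin (ψ r)^2 / r^2 * r^2 := by positivity
    rw [Real.norm_eq_abs, abs_of_nonneg (by positivity)]
    nlinarith
  -- sin²(ψ) is integrable on (1, ∞)
  have hsin : IntegrableOn (fun r : ℝ => Real.sin (ψ r) ^ 2) (Set.Ioi 1) := by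
    have hq : IntegrableOn
        (fun r : ℝ => ((g r ^ 2 + (ℓ : ℝ) * ((ℓ : ℝ) + 1) * Real.sin (ψ r) ^ 2 / r ^ 2) * r ^ 2
          - g r ^ 2 * r ^ 2) / ((ℓ:ℝ) * ((ℓ:ℝ)+1))) (Set.Ioi 1) :=
      (hE.sub hgr2).div_const ((ℓ:ℝ) * ((ℓ:ℝ)+1))
    refine hq.congr_fun (fun r hr => ?_) measurableSet_Ioi
    have hr0 : r ≠ 0 := by
      have : (1:ℝ) < r := hr; linarith
    field_simp
    ring
  -- (r²)⁻¹ is integrable on (1, ∞)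
  have hinv2 : IntegrableOn (fun r : ℝ => (r^2)⁻¹) (Set.Ioi 1) := by
    refine (integrableOn_Ioi_rpow_of_lt (by norm_num : (-2:ℝ) < -1) one_pos).congr_fun
      (fun r hr => ?_) measurableSet_Ioi
    have h0 : (0:ℝ) < r := lt_trans one_pos hr
    rw [show (fun t : ℝ => t ^ (-2:ℝ)) r = r ^ (-(2:ℝ)) from rfl, Real.rpow_neg h0.le]
    congr 1
    rw [show ((2:ℝ)) = ((2:ℕ):ℝ) by norm_num, Real.rpow_natCast]
  -- hence g is integrable on (1, ∞)
  have hg_int : IntegrableOn g (Set.Ioi 1) := by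
    refine (hgr2.add hinv2).mono' hgm ?_
    filter_upwards [ae_restrict_mem measurableSet_Ioi] with r hr
    have hr1 : (1:ℝ) < r := hr
    have h0 : (0:ℝ) < r := by linarith
    have e1 : r * r⁻¹ = 1 := mul_inv_cancel₀ h0.ne'
    have e2 : r⁻¹ ^ 2 = (r^2)⁻¹ := inv_pow r 2
    have e3 : |g r| * r * r⁻¹ = |g r| := by field_simp
    simp only [Pi.add_apply]
    rw [Real.norm_eq_abs]
    nlinarith [sq_nonneg (|g r| * r - r⁻¹), sq_abs (g r), abs_nonneg (g r)]
  -- ψ equals the primitive of g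
  have hψ : ∀ r : ℝ, 1 ≤ r → ψ r = ∫ t in (1:ℝ)..r, g t := by
    intro r hr
    have := (hAC 1 r le_rfl hr).2
    rw [hbc] at this
    linarith
  -- convergence of ψ to L := ∫_{(1,∞)} g
  set L := ∫ r in Set.Ioi (1:ℝ), g r with hLdef
  have hT : Filter.Tendsto ψ Filter.atTop (nhds L) := by
    have h1 := intervalIntegral_tendsto_integral_Ioi 1 hg_int Filter.tendsto_id
    refine h1.congr' ?_
    filter_upwards [Filter.eventually_ge_atTop (1:ℝ)] with r hr
    exact (hψ r hr).symm
  -- sin L = 0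
  have hsL : Real.sin L = 0 := by
    by_contra hne
    have hε : (0:ℝ) < Real.sin L ^ 2 / 2 := by positivity
    have hts : Filter.Tendsto (fun r => Real.sin (ψ r) ^ 2) Filter.atTop
        (nhds (Real.sin L ^ 2)) := ((Real.continuous_sin.tendsto L).comp hT).pow 2
    have hev : ∀ᶠ r in Filter.atTop, Real.sin L ^ 2 / 2 < Real.sin (ψ r) ^ 2 :=
      hts (lt_mem_nhds (by linarith))
    obtain ⟨R, hR⟩ := Filter.eventually_atTop.mp hev
    set R' := max R 2 with hR'def
    have hR'1 : (1:ℝ) < R' := lt_of_lt_of_le one_lt_two (le_max_right R 2)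
    have hconst : IntegrableOn (fun _ : ℝ => Real.sin L ^ 2 / 2) (Set.Ioi R') := by
      refine (hsin.mono_set (Set.Ioi_subset_Ioi hR'1.le)).mono' aestronglyMeasurable_const ?_
      filter_upwards [ae_restrict_mem measurableSet_Ioi] with r hr
      have hrR : R ≤ r := le_trans (le_max_left R 2) (le_of_lt hr)
      rw [Real.norm_eq_abs, abs_of_nonneg (by positivity)]
      exact (hR r hrR).le
    rcases (integrableOn_const_iff).mp hconst with h | h
    · rw [enorm_eq_zero] at h
      linarith
    · rw [Real.volume_Ioi] at h
      exact (lt_irrefl _ h).elim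
  obtain ⟨n, hn⟩ := Real.sin_eq_zero_iff.mp hsL
  exact ⟨n, hn ▸ hT⟩
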